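/- Assume condition (∗). Then the disjoint union X = ⋃_{i∈I} X_i is reversible if and only if ⟨X_i : i ∈ I⟩ is a reversible sequence of structures and every ℤ-sequence in I is trivial. -/
import Mathlib


universe u v w

section Defs

variable {α : Type*} {β : Type*}

/-- `f` is a homomorphism from `⟨α, r⟩` to `⟨β, s⟩`. -/
def IsHom (r : α → α → Prop) (s : β → β → Prop) (f : α → β) : Prop :=
  ∀ x y, r x y → s (f x) (f y)

/-- A condensation is a bijective homomorphism. -/
def IsCond (r : α → α → Prop) (s : β → β → Prop) (f : α → β) : Prop :=
  Function.Bijective f ∧ IsHom r s f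

/-- A monomorphism is an injective homomorphism. -/
def IsMono (r : α → α → Prop) (s : β → β → Prop) (f : α → β) : Prop :=
  Function.Injective f ∧ IsHom r s f

/-- An isomorphism of binary structures. -/
def IsIso (r : α → α → Prop) (s : β → β → Prop) (f : α → β) : Prop :=
  Function.Bijective f ∧ ∀ x y, r x y ↔ s (f x) (f y)

/-- A binary structure is reversible iff every self-condensation is an automorphism. -/
def Reversible (r : α → α → Prop) : Prop :=
  ∀ f : α → α, IsCond r r f → IsIso r r f

/-- A binary structure is connected iff it has exactly one component: it is nonempty and
the least equivalence relation containing `r` relates any two points. -/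
def Connected (r : α → α → Prop) : Prop :=
  Nonempty α ∧ ∀ x y, Relation.EqvGen r x y

/-- The relation of the disjoint union of the structures `⟨X i, R i⟩`. -/
def unionRel {I : Type*} {X : I → Type*} (R : ∀ i, X i → X i → Prop) :
    (Σ i, X i) → (Σ i, X i) → Prop :=
  fun a b => ∃ h : a.1 = b.1, R b.1 (h ▸ a.2) b.2

end Defs

namespace Stmt0

section Generic
variable {α β γ : Type*} {r : α → α → Prop} {s : β → β → Prop} {t : γ → γ → Prop}
  {f : α → β} {g : β → γ}

lemma cond_comp (hf : IsCond r s f) (hg : IsCond s t g) : IsCond r t (g ∘ f) :=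
  ⟨hg.1.comp hf.1, fun x y h => hg.2 _ _ (hf.2 _ _ h)⟩

lemma iso_comp (hf : IsIso r s f) (hg : IsIso s t g) : IsIso r t (g ∘ f) :=
  ⟨hg.1.comp hf.1, fun x y => (hf.2 x y).trans (hg.2 _ _)⟩

lemma iso_cond (hf : IsIso r s f) : IsCond r s f :=
  ⟨hf.1, fun x y h => (hf.2 x y).1 h⟩

lemma iso_id : IsIso r r (id : α → α) := ⟨Function.bijective_id, fun _ _ => Iff.rfl⟩

lemma iso_symm (hf : IsIso r s f) :
    ∃ g : β → α, IsIso s r g ∧ (∀ a, g (f a) = a) ∧ (∀ b, f (g b) = b) := by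
  let e := Equiv.ofBijective f hf.1
  refine ⟨e.symm, ⟨e.symm.bijective, fun x y => ?_⟩, fun a => e.symm_apply_apply a,
    fun b => e.apply_symm_apply b⟩
  have := hf.2 (e.symm x) (e.symm y)
  simp only [show ∀ z, f (e.symm z) = z from fun z => e.apply_symm_apply z] at this
  exact this.symm

/-- If `F : A → B` and `H : B → A` are condensations and `H ∘ F` is an isomorphism,
then `F` is an isomorphism. -/
lemma iso_of_comp_iso {F : α → β} {H : β → α} (hF : IsCond r s F) (hH : IsCond s r H)
    (hc : IsIso r r (H ∘ F)) : IsIso r s F := by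
  refine ⟨hF.1, fun x y => ⟨hF.2 x y, fun h => ?_⟩⟩
  have := hH.2 _ _ h
  exact (hc.2 x y).2 this

lemma hom_eqvGen (hf : IsHom r s f) {x y : α} (h : Relation.EqvGen r x y) :
    Relation.EqvGen s (f x) (f y) := by
  induction h with
  | rel a b h => exact .rel _ _ (hf _ _ h)
  | refl a => exact .refl _
  | symm a b _ ih => exact .symm _ _ ih
  | trans a b c _ _ ih1 ih2 => exact .trans _ _ _ ih1 ih2

end Generic

section Union
variable {I : Type u} {X : I → Type v} {R : ∀ i, X i → X i → Prop}

lemma unionRel_mk {i : I} {x y : X i} : unionRel R ⟨i, x⟩ ⟨i, y⟩ ↔ R i x y := by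
  constructor
  · rintro ⟨h, hr⟩; exact hr
  · intro hr; exact ⟨rfl, hr⟩

lemma eqvGen_fst {a b : Σ i, X i} (h : Relation.EqvGen (unionRel R) a b) : a.1 = b.1 := by
  induction h with
  | rel a b h => exact h.1
  | refl => rfl
  | symm _ _ _ ih => exact ih.symm
  | trans _ _ _ _ _ ih1 ih2 => exact ih1.trans ih2

lemma eqvGen_of_fst_eq (hconn : ∀ i, Connected (R i)) {a b : Σ i, X i} (h : a.1 = b.1) :
    Relation.EqvGen (unionRel R) a b := by
  obtain ⟨i, x⟩ := a; obtain ⟨j, y⟩ := b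
  cases h
  exact hom_eqvGen (f := fun z => (⟨i, z⟩ : Σ i, X i))
    (fun a b h => unionRel_mk.2 h) ((hconn i).2 x y)

lemma sigma_eq_of_fst {a : Σ i, X i} {j : I} (h : a.1 = j) : a = ⟨j, h ▸ a.2⟩ := by
  obtain ⟨i, x⟩ := a; cases h; rfl

end Union

section SigmaMap
variable {I : Type u} {X : I → Type v} {R : ∀ i, X i → X i → Prop}
  {f : I → I} {G : ∀ i, X i → X (f i)}

/-- a fiberwise map on the disjoint union -/
def sigmaMap (f : I → I) (G : ∀ i, X i → X (f i)) : (Σ i, X i) → Σ i, X i :=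
  fun a => ⟨f a.1, G a.1 a.2⟩

lemma sigmaMap_hom (hG : ∀ i, IsHom (R i) (R (f i)) (G i)) :
    IsHom (unionRel R) (unionRel R) (sigmaMap f G) := by
  rintro ⟨i, x⟩ ⟨j, y⟩ ⟨h, hr⟩
  dsimp at h; cases h
  exact ⟨rfl, hG i x y hr⟩

lemma sigmaMap_hom_fiber (h : IsHom (unionRel R) (unionRel R) (sigmaMap f G)) (i : I) :
    IsHom (R i) (R (f i)) (G i) := by
  intro x y hxy
  obtain ⟨he, hr⟩ := h ⟨i, x⟩ ⟨i, y⟩ ⟨rfl, hxy⟩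
  exact hr

lemma sigmaMap_fiber_inj (h : Function.Injective (sigmaMap f G)) (i : I) :
    Function.Injective (G i) := by
  intro x y hxy
  have : sigmaMap f G ⟨i, x⟩ = sigmaMap f G ⟨i, y⟩ := by
    simp only [sigmaMap, hxy]
  have := h this
  simpa using this

lemma sigmaMap_idx_surj (h : Function.Surjective (sigmaMap f G))
    (hne : ∀ i, Nonempty (X i)) : Function.Surjective f := by
  intro j
  obtain ⟨y⟩ := hne j
  obtain ⟨⟨i, x⟩, hix⟩ := h ⟨j, y⟩
  exact ⟨i, congrArg Sigma.fst hix⟩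

lemma sigmaMap_fiber_surj (h : Function.Surjective (sigmaMap f G))
    (hfi : Function.Injective f) (i : I) : Function.Surjective (G i) := by
  intro y
  obtain ⟨⟨i', x⟩, hix⟩ := h ⟨f i, y⟩
  have h1 : f i' = f i := congrArg Sigma.fst hix
  have h2 : i' = i := hfi h1
  subst h2
  refine ⟨x, ?_⟩
  simpa [sigmaMap] using hix

/-- restriction of a fiberwise map to the union of fibers over `j` -/
def restrict (f : I → I) (G : ∀ i, X i → X (f i)) (j : I) :
    (Σ i : {i : I // f i = j}, X i.1) → X j :=
  fun p => p.1.2 ▸ G p.1.1 p.2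

lemma restrict_hom (hG : ∀ i, IsHom (R i) (R (f i)) (G i)) (j : I) :
    IsHom (unionRel (fun i : {i : I // f i = j} => R i.1)) (R j) (restrict f G j) := by
  rintro ⟨⟨i, hi⟩, x⟩ ⟨⟨i', hi'⟩, y⟩ ⟨h, hr⟩
  dsimp at h
  have hii : i = i' := congrArg Subtype.val h
  subst hii
  cases h
  subst hi
  exact hG i x y hr

lemma restrict_eq {j : I} (i : I) (hi : f i = j) (x : X i) :
    (⟨j, restrict f G j ⟨⟨i, hi⟩, x⟩⟩ : Σ i, X i) = ⟨f i, G i x⟩ := by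
  subst hi; rfl

lemma restrict_bij (hbij : Function.Bijective (sigmaMap f G)) (j : I) :
    Function.Bijective (restrict f G j) := by
  constructor
  · rintro ⟨⟨i, hi⟩, x⟩ ⟨⟨i', hi'⟩, y⟩ h
    have key : sigmaMap f G ⟨i, x⟩ = sigmaMap f G ⟨i', y⟩ := by
      show (⟨f i, G i x⟩ : Σ i, X i) = ⟨f i', G i' y⟩
      rw [← restrict_eq i hi x, ← restrict_eq i' hi' y, h]
    have := hbij.1 key
    obtain ⟨h1, h2⟩ := Sigma.mk.inj_iff.1 this
    have hii : i = i' := h1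
    subst hii
    cases eq_of_heq h2
    rfl
  · intro y
    obtain ⟨⟨i, x⟩, hix⟩ := hbij.2 ⟨j, y⟩
    have h1 : f i = j := congrArg Sigma.fst hix
    refine ⟨⟨⟨i, h1⟩, x⟩, ?_⟩
    have := (restrict_eq (G := G) i h1 x).trans hix
    obtain ⟨-, h2⟩ := Sigma.mk.inj_iff.1 this
    exact eq_of_heq h2

lemma bij_of_restrict (hr : ∀ j, Function.Bijective (restrict f G j)) :
    Function.Bijective (sigmaMap f G) := by
  constructor
  · rintro ⟨i, x⟩ ⟨i', y⟩ h
    have h1 : f i = f i' := congrArg Sigma.fst h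
    have key : restrict f G (f i') ⟨⟨i, h1⟩, x⟩ = restrict f G (f i') ⟨⟨i', rfl⟩, y⟩ := by
      have e1 := restrict_eq (G := G) i h1 x
      have e2 := restrict_eq (G := G) i' (rfl : f i' = f i') y
      have : (⟨f i', restrict f G (f i') ⟨⟨i, h1⟩, x⟩⟩ : Σ i, X i)
           = ⟨f i', restrict f G (f i') ⟨⟨i', rfl⟩, y⟩⟩ := by
        rw [e1, e2]; exact h
      obtain ⟨-, h2⟩ := Sigma.mk.inj_iff.1 this
      exact eq_of_heq h2
    have := (hr (f i')).1 key
    obtain ⟨h2, h3⟩ := Sigma.mk.inj_iff.1 this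
    have hii : i = i' := congrArg Subtype.val h2
    subst hii
    cases eq_of_heq h3
    rfl
  · rintro ⟨j, y⟩
    obtain ⟨⟨⟨i, hi⟩, x⟩, hx⟩ := (hr j).2 y
    refine ⟨⟨i, x⟩, ?_⟩
    show (⟨f i, G i x⟩ : Σ i, X i) = ⟨j, y⟩
    rw [← restrict_eq i hi x, hx]

end SigmaMap

section Cast
variable {I : Type u} {X : I → Type v} {R : ∀ i, X i → X i → Prop}

lemma cast_iso {j j' : I} (h : j = j') : IsIso (R j) (R j') (fun x : X j => h ▸ x) := by
  subst h; exact iso_id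

lemma cast2 {j j' : I} (h1 : j = j') (h2 : j' = j) (x : X j) : h2 ▸ h1 ▸ x = x := by
  cases h1; rfl

lemma z_chain {P : ℤ → ℤ → Prop} (hrefl : ∀ k, P k k) (hsymm : ∀ k l, P k l → P l k)
    (htrans : ∀ k l m, P k l → P l m → P k m) (hstep : ∀ k, P k (k + 1)) : ∀ k l, P k l := by
  have key0 : ∀ (n : ℕ) (k : ℤ), P k (k + n) := by
    intro n
    induction n with
    | zero => intro k; simpa using hrefl k
    | succ n ih =>
        intro k
        have h := htrans k (k + n) (k + n + 1) (ih k) (hstep _)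
        rw [show ((n + 1 : ℕ) : ℤ) = (n : ℤ) + 1 by push_cast; ring, ← add_assoc]
        exact h
  have key : ∀ k l, k ≤ l → P k l := by
    intro k l hkl
    rw [show l = k + ((l - k).toNat : ℤ) by omega]
    exact key0 _ k
  intro k l
  rcases le_total k l with h | h
  · exact key k l h
  · exact hsymm _ _ (key l k h)

variable (f : I → I) (G : ∀ i, X i → X (f i))

/-- iterate of a fiberwise map along the orbit of `f` -/
def Gpow (i : I) : ∀ n : ℕ, X i → X (f^[n] i)
  | 0 => id
  | n + 1 => fun x => (Function.iterate_succ_apply' f n i).symm ▸ G (f^[n] i) (Gpow i n x)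

lemma Gpow_cond (hG : ∀ i, IsCond (R i) (R (f i)) (G i)) (i : I) (n : ℕ) :
    IsCond (R i) (R (f^[n] i)) (Gpow f G i n) := by
  induction n with
  | zero => exact ⟨Function.bijective_id, fun _ _ h => h⟩
  | succ n ih =>
      have h1 : IsCond (R i) (R (f (f^[n] i)))
          (fun x => G (f^[n] i) (Gpow f G i n x)) := cond_comp ih (hG _)
      have h2 := cast_iso (R := R) (X := X) (Function.iterate_succ_apply' f n i).symm
      have h3 : IsCond (R (f (f^[n] i))) (R (f^[n+1] i))
          (fun y => (Function.iterate_succ_apply' f n i).symm ▸ y) :=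
        ⟨h2.1, fun x y h => (h2.2 x y).1 h⟩
      exact cond_comp h1 h3

end Cast

section Forward
variable {I : Type u} {X : I → Type v} {R : ∀ i, X i → X i → Prop}

lemma forward_a (hconn : ∀ i, Connected (R i)) (hRev : Reversible (unionRel R)) :
    ¬ ∃ f : I → I, Function.Surjective f ∧ ¬ Function.Bijective f ∧
      ∀ j : I, ∃ F : (Σ i : {i : I // f i = j}, X i.1) → X j,
        IsCond (unionRel (fun i : {i : I // f i = j} => R i.1)) (R j) F := by
  rintro ⟨f, hsurj, hnbij, hex⟩
  choose Fc hFc using hex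
  set G : ∀ i, X i → X (f i) := fun i x => Fc (f i) ⟨⟨i, rfl⟩, x⟩ with hGdef
  have hres : ∀ j, restrict f G j = Fc j := by
    intro j
    funext p
    obtain ⟨⟨i, hi⟩, x⟩ := p
    subst hi
    rfl
  have hbij : Function.Bijective (sigmaMap f G) :=
    bij_of_restrict (fun j => by rw [hres]; exact (hFc j).1)
  have hhom : IsHom (unionRel R) (unionRel R) (sigmaMap f G) := by
    apply sigmaMap_hom
    intro i x y h
    exact (hFc (f i)).2 ⟨⟨i, rfl⟩, x⟩ ⟨⟨i, rfl⟩, y⟩ ⟨rfl, h⟩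
  have hiso := hRev _ ⟨hbij, hhom⟩
  have hninj : ¬ Function.Injective f := fun hinj => hnbij ⟨hinj, hsurj⟩
  rw [Function.not_injective_iff] at hninj
  obtain ⟨i, i', hfe, hne⟩ := hninj
  obtain ⟨φ, hφ, hgf, -⟩ := iso_symm hiso
  have h1 : Relation.EqvGen (unionRel R)
      (sigmaMap f G ⟨i, (hconn i).1.some⟩) (sigmaMap f G ⟨i', (hconn i').1.some⟩) :=
    eqvGen_of_fst_eq hconn hfe
  have h2 := hom_eqvGen (iso_cond hφ).2 h1
  simp only [hgf] at h2
  exact hne (eqvGen_fst h2)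

end Forward

section ForwardB
variable {I : Type u} {X : I → Type v} {R : ∀ i, X i → X i → Prop}

lemma forward_b (hconn : ∀ i, Connected (R i)) (hRev : Reversible (unionRel R))
    (g : ℤ → I) (hg : Function.Injective g)
    (hc : ∀ k l : ℤ, k < l → ∃ F : X (g k) → X (g l), IsCond (R (g k)) (R (g l)) F) :
    ∀ k l : ℤ, ∃ F : X (g k) → X (g l), IsIso (R (g k)) (R (g l)) F := by
  classical
  choose Fc hFc using hc
  set step : ∀ k : ℤ, X (g k) → X (g (k + 1)) := fun k => Fc k (k + 1) (by omega) with hstepdef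
  have hstep : ∀ k, IsCond (R (g k)) (R (g (k + 1))) (step k) := fun k => hFc k (k + 1) _
  set Φ : (Σ i, X i) → Σ i, X i := fun a =>
    if h : ∃ k, g k = a.1 then ⟨g (h.choose + 1), step h.choose (h.choose_spec.symm ▸ a.2)⟩
    else a with hΦdef
  have step_congr : ∀ {k k' : ℤ} (h : k = k') (x : X (g k)),
      (⟨g (k + 1), step k x⟩ : Σ i, X i) = ⟨g (k' + 1), step k' ((congrArg g h) ▸ x)⟩ := by
    intro k k' h x; subst h; rfl
  have phi_g : ∀ (k : ℤ) (x : X (g k)), Φ ⟨g k, x⟩ = ⟨g (k + 1), step k x⟩ := by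
    intro k x
    have hex : ∃ k', g k' = (⟨g k, x⟩ : Σ i, X i).1 := ⟨k, rfl⟩
    have h0 : Φ ⟨g k, x⟩
        = ⟨g (hex.choose + 1), step hex.choose (hex.choose_spec.symm ▸ x)⟩ := dif_pos hex
    rw [h0, step_congr (hg hex.choose_spec), cast2]
  have phi_ng : ∀ (a : Σ i, X i), ¬ (∃ k, g k = a.1) → Φ a = a := fun a h => dif_neg h
  have hinj : Function.Injective Φ := by
    rintro ⟨i, x⟩ ⟨j, y⟩ h
    by_cases hi : ∃ k, g k = i
    · obtain ⟨k, rfl⟩ := hi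
      by_cases hj : ∃ l, g l = j
      · obtain ⟨l, rfl⟩ := hj
        rw [phi_g, phi_g] at h
        obtain ⟨h1, h2⟩ := Sigma.mk.inj_iff.1 h
        have hkl : k = l := by have := hg h1; omega
        subst hkl
        rw [(hstep k).1.1 (eq_of_heq h2)]
      · rw [phi_g, phi_ng ⟨j, y⟩ hj] at h
        exact absurd ⟨k + 1, congrArg Sigma.fst h⟩ hj
    · by_cases hj : ∃ l, g l = j
      · obtain ⟨l, rfl⟩ := hj
        rw [phi_ng ⟨i, x⟩ hi, phi_g] at h
        exact absurd ⟨l + 1, (congrArg Sigma.fst h).symm⟩ hi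
      · rw [phi_ng _ hi, phi_ng _ hj] at h; exact h
  have hsurjΦ : Function.Surjective Φ := by
    rintro ⟨j, y⟩
    by_cases hj : ∃ m, g m = j
    · obtain ⟨m, rfl⟩ := hj
      obtain ⟨k, rfl⟩ : ∃ k : ℤ, k + 1 = m := ⟨m - 1, by omega⟩
      obtain ⟨x, hx⟩ := (hstep k).1.2 y
      exact ⟨⟨g k, x⟩, by rw [phi_g, hx]⟩
    · exact ⟨⟨j, y⟩, phi_ng _ hj⟩
  have hhomΦ : IsHom (unionRel R) (unionRel R) Φ := by
    rintro ⟨i, x⟩ ⟨i', y⟩ ⟨h, hr⟩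
    dsimp at h; cases h
    by_cases hi : ∃ k, g k = i
    · obtain ⟨k, rfl⟩ := hi
      rw [phi_g, phi_g]
      exact unionRel_mk.2 ((hstep k).2 _ _ hr)
    · rw [phi_ng _ hi, phi_ng _ hi]
      exact ⟨rfl, hr⟩
  have hisoΦ := hRev Φ ⟨⟨hinj, hsurjΦ⟩, hhomΦ⟩
  have step_iso : ∀ k, IsIso (R (g k)) (R (g (k + 1))) (step k) := by
    intro k
    refine ⟨⟨(hstep k).1.1, ?_⟩, fun x y => ?_⟩
    · intro y
      obtain ⟨⟨i, x⟩, hx⟩ := hsurjΦ ⟨g (k + 1), y⟩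
      by_cases hi : ∃ l, g l = i
      · obtain ⟨l, rfl⟩ := hi
        rw [phi_g] at hx
        obtain ⟨h1, h2⟩ := Sigma.mk.inj_iff.1 hx
        have hlk : l = k := by have := hg h1; omega
        subst hlk
        exact ⟨x, eq_of_heq h2⟩
      · rw [phi_ng _ hi] at hx
        exact absurd ⟨k + 1, (congrArg Sigma.fst hx).symm⟩ hi
    · have hii := hisoΦ.2 ⟨g k, x⟩ ⟨g k, y⟩
      rw [phi_g, phi_g] at hii
      constructor
      · intro h; exact unionRel_mk.1 (hii.1 (unionRel_mk.2 h))
      · intro h; exact unionRel_mk.1 (hii.2 (unionRel_mk.2 h))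
  refine z_chain (P := fun k l => ∃ F : X (g k) → X (g l), IsIso (R (g k)) (R (g l)) F)
    (fun k => ⟨id, iso_id⟩) (fun k l hkl => ?_)
    (fun k l m h1 h2 => ?_) (fun k => ⟨step k, step_iso k⟩)
  · obtain ⟨F, hF⟩ := hkl
    obtain ⟨φ, hφ, -, -⟩ := iso_symm hF
    exact ⟨φ, hφ⟩
  · obtain ⟨F, hF⟩ := h1
    obtain ⟨F', hF'⟩ := h2
    exact ⟨F' ∘ F, iso_comp hF hF'⟩

end ForwardB

section FiberIso
variable {I : Type u} {X : I → Type v} {R : ∀ i, X i → X i → Prop}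

lemma fiber_iso (hrev : ∀ i, Reversible (R i))
    (hB : ∀ g : ℤ → I, Function.Injective g →
      (∀ k l : ℤ, k < l → ∃ F : X (g k) → X (g l), IsCond (R (g k)) (R (g l)) F) →
      ∀ k l : ℤ, ∃ F : X (g k) → X (g l), IsIso (R (g k)) (R (g l)) F)
    {f : I → I} (hf : Function.Bijective f) {G : ∀ i, X i → X (f i)}
    (hG : ∀ i, IsCond (R i) (R (f i)) (G i)) (i : I) : IsIso (R i) (R (f i)) (G i) := by
  classical
  obtain ⟨H, hH⟩ : ∃ H : X (f i) → X i, IsCond (R (f i)) (R i) H := by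
    by_cases hfin : ∃ n : ℕ, f^[n + 1] i = i
    · obtain ⟨n, hn⟩ := hfin
      have he : f^[n] (f i) = i := by
        rw [← Function.iterate_succ_apply]; exact hn
      refine ⟨fun y => he ▸ Gpow f G (f i) n y, ?_⟩
      have h1 := Gpow_cond (R := R) f G hG (f i) n
      have h2 := cast_iso (R := R) (X := X) he
      exact cond_comp h1 ⟨h2.1, fun x y h => (h2.2 x y).1 h⟩
    · push_neg at hfin
      set e : Equiv.Perm I := Equiv.ofBijective f hf with hedef
      have hpow : ∀ (n : ℕ) (j : I), (e ^ (n : ℤ)) j = f^[n] j := by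
        intro n j
        rw [zpow_natCast, Equiv.Perm.coe_pow]
        rfl
      set g : ℤ → I := fun k => (e ^ k) i with hgdef
      have hkey : ∀ k l : ℤ, k < l → g k = g l → False := by
        intro k l hlt hkl
        have h1 : (e ^ (l - k)) i = i := by
          have h2 : (e ^ (-k)) ((e ^ l) i) = (e ^ (-k)) ((e ^ k) i) :=
            congrArg (e ^ (-k)) hkl.symm
          rw [← Equiv.Perm.mul_apply, ← Equiv.Perm.mul_apply, ← zpow_add, ← zpow_add] at h2
          rw [show -k + l = l - k by ring, show -k + k = 0 by ring, zpow_zero] at h2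
          simpa using h2
        obtain ⟨n, hn⟩ : ∃ n : ℕ, (n : ℤ) + 1 = l - k := ⟨(l - k - 1).toNat, by omega⟩
        refine hfin n ?_
        have h3 := hpow (n + 1) i
        rw [show ((n + 1 : ℕ) : ℤ) = l - k by push_cast; omega] at h3
        rw [← h3]
        exact h1
      have hginj : Function.Injective g := by
        intro k l hkl
        rcases lt_trichotomy k l with h | h | h
        · exact absurd (hkey k l h hkl) not_false
        · exact h
        · exact absurd (hkey l k h hkl.symm) not_false
      have hchain : ∀ k l : ℤ, k < l →
          ∃ F : X (g k) → X (g l), IsCond (R (g k)) (R (g l)) F := by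
        intro k l hkl
        obtain ⟨n, hn⟩ : ∃ n : ℕ, (n : ℤ) = l - k := ⟨(l - k).toNat, by omega⟩
        have hgl : f^[n] (g k) = g l := by
          rw [← hpow n (g k)]
          show (e ^ (n : ℤ)) ((e ^ k) i) = (e ^ l) i
          rw [← Equiv.Perm.mul_apply, ← zpow_add, show (n : ℤ) + k = l by omega]
        refine ⟨fun x => hgl ▸ Gpow f G (g k) n x, ?_⟩
        have h1 := Gpow_cond (R := R) f G hG (g k) n
        have h2 := cast_iso (R := R) (X := X) hgl
        exact cond_comp h1 ⟨h2.1, fun x y h => (h2.2 x y).1 h⟩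
      obtain ⟨ψ, hψ⟩ := hB g hginj hchain 1 0
      have hg1 : g 1 = f i := by
        show (e ^ (1 : ℤ)) i = f i
        rw [zpow_one]
        rfl
      have hg0 : g 0 = i := by
        show (e ^ (0 : ℤ)) i = i
        rw [zpow_zero]
        rfl
      refine ⟨fun y => hg0 ▸ ψ (hg1.symm ▸ y), ?_⟩
      have c1 := cast_iso (R := R) (X := X) hg1.symm
      have c2 := cast_iso (R := R) (X := X) hg0
      have hiso2 := iso_comp (iso_comp c1 hψ) c2
      exact iso_cond hiso2
  exact iso_of_comp_iso (hG i) hH (hrev i (H ∘ G i) (cond_comp (hG i) hH))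

end FiberIso

end Stmt0

/-- **Theorem (Statement 0).** Under condition (∗) — the `⟨X i, R i⟩` are (pairwise disjoint,
realized by a sigma type) connected and reversible binary structures — the disjoint union
is reversible iff `⟨X i : i ∈ I⟩` is a reversible sequence of structures (its components cannot
be merged by condensations along a non-bijective surjection of the index set) and every
ℤ-sequence in `I` is trivial. -/
theorem stmt0 {I : Type u} {X : I → Type v} (R : ∀ i, X i → X i → Prop)
    (hconn : ∀ i, Connected (R i)) (hrev : ∀ i, Reversible (R i)) :
    Reversible (unionRel R) ↔
      ((¬ ∃ f : I → I, Function.Surjective f ∧ ¬ Function.Bijective f ∧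
          ∀ j : I, ∃ F : (Σ i : {i : I // f i = j}, X i.1) → X j,
            IsCond (unionRel (fun i : {i : I // f i = j} => R i.1)) (R j) F) ∧
        (∀ g : ℤ → I,
          Function.Injective g →
          (∀ k l : ℤ, k < l → ∃ F : X (g k) → X (g l), IsCond (R (g k)) (R (g l)) F) →
          ∀ k l : ℤ, ∃ F : X (g k) → X (g l), IsIso (R (g k)) (R (g l)) F)) := by
  constructor
  · intro hRev
    exact ⟨Stmt0.forward_a hconn hRev, fun g hg hc => Stmt0.forward_b hconn hRev g hg hc⟩
  · rintro ⟨hA, hB⟩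
    intro F hF
    obtain ⟨hbij, hhom⟩ := hF
    classical
    set f : I → I := fun i => (F ⟨i, (hconn i).1.some⟩).1 with hfdef
    have ind_spec : ∀ (i : I) (x : X i), (F ⟨i, x⟩).1 = f i := by
      intro i x
      have h1 : Relation.EqvGen (unionRel R) ⟨i, x⟩ ⟨i, (hconn i).1.some⟩ :=
        Stmt0.eqvGen_of_fst_eq hconn rfl
      exact Stmt0.eqvGen_fst (Stmt0.hom_eqvGen hhom h1)
    set G : ∀ i, X i → X (f i) := fun i x => (ind_spec i x) ▸ (F ⟨i, x⟩).2 with hGdef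
    have F_eq : F = Stmt0.sigmaMap f G := by
      funext a
      obtain ⟨i, x⟩ := a
      exact Stmt0.sigma_eq_of_fst (ind_spec i x)
    rw [F_eq] at hbij hhom ⊢
    have hGhom : ∀ i, IsHom (R i) (R (f i)) (G i) := Stmt0.sigmaMap_hom_fiber hhom
    have hne : ∀ i, Nonempty (X i) := fun i => (hconn i).1
    have hfsurj : Function.Surjective f := Stmt0.sigmaMap_idx_surj hbij.2 hne
    have hfbij : Function.Bijective f := by
      by_contra hnb
      exact hA ⟨f, hfsurj, hnb, fun j =>
        ⟨Stmt0.restrict f G j, Stmt0.restrict_bij hbij j, Stmt0.restrict_hom hGhom j⟩⟩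
    have hGcond : ∀ i, IsCond (R i) (R (f i)) (G i) := fun i =>
      ⟨⟨Stmt0.sigmaMap_fiber_inj hbij.1 i, Stmt0.sigmaMap_fiber_surj hbij.2 hfbij.1 i⟩, hGhom i⟩
    have hGiso : ∀ i, IsIso (R i) (R (f i)) (G i) := fun i =>
      Stmt0.fiber_iso hrev hB hfbij hGcond i
    refine ⟨hbij, ?_⟩
    rintro ⟨i, x⟩ ⟨j, y⟩
    constructor
    · exact hhom _ _
    · rintro ⟨h, hr⟩
      have hij : i = j := hfbij.1 h
      subst hij
      exact ⟨rfl, ((hGiso i).2 x y).2 hr⟩
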